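/- arXiv:math/0403128 — 3 statements merged into one kernel-verified Lean document; each statement's English description precedes it below -/
import Mathlib

section
/- Let f ∈ L²(0,∞) and g be measurable with g ∈ L²(0,x) for every x ∈ [0,∞) but g ∉ L²(0,∞). Then lim_{x→∞} (∫₀ˣ f·conj(g)) / (∫₀ˣ |g|²)^{1/2} = 0. -/
open MeasureTheory Filter
open scoped ENNReal NNReal

section Helpers

lemma L2h_memLp {μ : Measure ℝ} {f : ℝ → ℂ} (hm : Measurable f)
    (h : Integrable (fun t => ‖f t‖ ^ 2) μ) : MemLp f 2 μ :=
  (memLp_two_iff_integrable_sq_norm hm.aestronglyMeasurable).2 h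

lemma L2h_integrable_mul_conj {μ : Measure ℝ} {f g : ℝ → ℂ} (hgm : Measurable g)
    (hf : MemLp f 2 μ) (hg : MemLp g 2 μ) :
    Integrable (fun t => f t * (starRingEnd ℂ) (g t)) μ := by
  have hgc : MemLp (fun t => (starRingEnd ℂ) (g t)) 2 μ := by
    have hmc : Measurable (fun t => (starRingEnd ℂ) (g t)) :=
      continuous_star.measurable.comp hgm
    refine hg.of_le_mul (c := 1) hmc.aestronglyMeasurable ?_
    filter_upwards with x
    simp
  have hpqr : (1 : ℝ≥0∞) / 1 = 1 / 2 + 1 / 2 := by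
    simp [ENNReal.inv_two_add_inv_two]
  have h := hgc.smul (φ := f) (r := 1) hf
  rw [← memLp_one_iff_integrable]
  exact h

lemma L2h_cauchy_schwarz {μ : Measure ℝ} {f g : ℝ → ℂ}
    (hf : MemLp f 2 μ) (hg : MemLp g 2 μ) :
    ‖∫ t, f t * (starRingEnd ℂ) (g t) ∂μ‖ ≤
      Real.sqrt (∫ t, ‖f t‖ ^ 2 ∂μ) * Real.sqrt (∫ t, ‖g t‖ ^ 2 ∂μ) := by
  have h2 : ENNReal.ofReal (2 : ℝ) = 2 := by norm_num
  have hpq : Real.HolderConjugate 2 2 := Real.HolderConjugate.two_two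
  calc ‖∫ t, f t * (starRingEnd ℂ) (g t) ∂μ‖
      ≤ ∫ t, ‖f t * (starRingEnd ℂ) (g t)‖ ∂μ := norm_integral_le_integral_norm _
    _ = ∫ t, ‖f t‖ * ‖g t‖ ∂μ := by
        congr 1; ext t; simp [norm_mul]
    _ ≤ (∫ t, ‖f t‖ ^ (2 : ℝ) ∂μ) ^ ((1 : ℝ)/2) * (∫ t, ‖g t‖ ^ (2 : ℝ) ∂μ) ^ ((1 : ℝ)/2) := by
        refine integral_mul_norm_le_Lp_mul_Lq hpq ?_ ?_ <;> rw [h2] <;> assumption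
    _ = Real.sqrt (∫ t, ‖f t‖ ^ 2 ∂μ) * Real.sqrt (∫ t, ‖g t‖ ^ 2 ∂μ) := by
        have e : ∀ F : ℝ → ℂ, (∫ t, ‖F t‖ ^ (2 : ℝ) ∂μ) = ∫ t, ‖F t‖ ^ 2 ∂μ := by
          intro F
          congr 1
          ext t
          rw [show ((2:ℝ)) = ((2:ℕ):ℝ) by norm_num, Real.rpow_natCast]
        rw [e, e, ← Real.sqrt_eq_rpow, ← Real.sqrt_eq_rpow]

end Helpers

/-- The L² lemma: if `f ∈ L²(0,∞)` and `g` is square-integrable on every `(0,x)`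
but not on `(0,∞)`, then `(∫₀ˣ f·conj g) / (∫₀ˣ |g|²)^{1/2} → 0` as `x → ∞`. -/
theorem L2_lemma (f g : ℝ → ℂ)
    (hfm : Measurable f) (hgm : Measurable g)
    (hf : IntegrableOn (fun t => ‖f t‖ ^ 2) (Set.Ioi 0))
    (hgloc : ∀ x : ℝ, IntegrableOn (fun t => ‖g t‖ ^ 2) (Set.Ioc 0 x))
    (hg : ¬ IntegrableOn (fun t => ‖g t‖ ^ 2) (Set.Ioi 0)) :
    Tendsto (fun x : ℝ =>
        (∫ t in (0:ℝ)..x, f t * (starRingEnd ℂ) (g t)) /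
          ((Real.sqrt (∫ t in (0:ℝ)..x, ‖g t‖ ^ 2) : ℝ) : ℂ))
      atTop (nhds 0) := by
  set Q : ℝ → ℝ := fun x => ∫ t in (0:ℝ)..x, ‖g t‖ ^ 2 with hQ
  -- Q restricted to [0, ∞) is monotone
  have hQmono : ∀ a b : ℝ, 0 ≤ a → a ≤ b → Q a ≤ Q b := by
    intro a b ha hab
    have h1 : IntervalIntegrable (fun t => ‖g t‖ ^ 2) volume 0 a := by
      rw [intervalIntegrable_iff_integrableOn_Ioc_of_le ha]
      exact hgloc a
    have h2 : IntervalIntegrable (fun t => ‖g t‖ ^ 2) volume a b := by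
      rw [intervalIntegrable_iff_integrableOn_Ioc_of_le hab]
      exact (hgloc b).mono_set (Set.Ioc_subset_Ioc_left ha)
    have hadd := intervalIntegral.integral_add_adjacent_intervals h1 h2
    have hnn : 0 ≤ ∫ t in a..b, ‖g t‖ ^ 2 :=
      intervalIntegral.integral_nonneg hab (fun u _ => by positivity)
    simp only [hQ]
    rw [← hadd]
    linarith
  -- Q tends to infinity
  have hQtop : Tendsto Q atTop atTop := by
    by_contra hQb
    apply hg
    rw [tendsto_atTop_atTop] at hQb
    push_neg at hQb
    obtain ⟨b, hb⟩ := hQb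
    have hbound : ∀ x : ℝ, Q x ≤ b := by
      intro x
      obtain ⟨i, hix, hQi⟩ := hb (max x 0)
      calc Q x ≤ Q (max x 0) := by
            rcases le_or_gt 0 x with h | h
            · exact hQmono x (max x 0) h (le_max_left _ _)
            · have : max x 0 = 0 := max_eq_right h.le
              rw [this]
              have : Q x ≤ Q 0 := by
                simp only [hQ]
                rw [intervalIntegral.integral_same,
                  intervalIntegral.integral_symm]
                have : 0 ≤ ∫ t in x..0, ‖g t‖ ^ 2 :=
                  intervalIntegral.integral_nonneg h.le (fun u _ => by positivity)
                linarith
              simpa [hQ] using this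
        _ ≤ Q i := hQmono (max x 0) i (le_max_right _ _) hix
        _ ≤ b := hQi.le
    refine integrableOn_Ioi_of_intervalIntegral_norm_bounded b 0
      (fun i => (hgloc i)) tendsto_id ?_
    filter_upwards with i
    have : (∫ x in (0:ℝ)..i, ‖(‖g x‖ ^ 2 : ℝ)‖) = Q i := by
      simp only [hQ]
      congr 1
      ext t
      simp [abs_of_nonneg, sq_nonneg]
    rw [this]
    exact hbound i
  -- the total integral of ‖f‖²
  set If : ℝ := ∫ t in Set.Ioi (0:ℝ), ‖f t‖ ^ 2 with hIf
  have hftend : Tendsto (fun A : ℝ => ∫ t in (0:ℝ)..A, ‖f t‖ ^ 2) atTop (nhds If) :=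
    intervalIntegral_tendsto_integral_Ioi 0 hf tendsto_id
  rw [Metric.tendsto_atTop]
  intro ε hε
  set ε' : ℝ := ε / 3 with hε'
  have hε'pos : 0 < ε' := by positivity
  -- choose A
  obtain ⟨A₀, hA₀⟩ := (Metric.tendsto_atTop.1 hftend) (ε' ^ 2) (by positivity)
  set A : ℝ := max A₀ 0 with hA
  have hA0 : (0:ℝ) ≤ A := le_max_right _ _
  have hAtail : ∀ x, A ≤ x → (∫ t in Set.Ioc A x, ‖f t‖ ^ 2) ≤ ε' ^ 2 := by
    intro x hx
    have h1 := hA₀ A (le_max_left _ _)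
    rw [Real.dist_eq] at h1
    have h2 : (∫ t in (0:ℝ)..A, ‖f t‖ ^ 2) = ∫ t in Set.Ioc 0 A, ‖f t‖ ^ 2 :=
      intervalIntegral.integral_of_le hA0
    have hsub : Set.Ioc A x ⊆ Set.Ioi (0:ℝ) := fun t ht => lt_of_le_of_lt hA0 ht.1
    have hsub2 : Set.Ioc (0:ℝ) A ⊆ Set.Ioi (0:ℝ) := fun t ht => ht.1
    have hdisj : Disjoint (Set.Ioc (0:ℝ) A) (Set.Ioc A x) := Set.Ioc_disjoint_Ioc_of_le le_rfl
    have hunion : Set.Ioc (0:ℝ) A ∪ Set.Ioc A x = Set.Ioc 0 x := Set.Ioc_union_Ioc_eq_Ioc hA0 hx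
    have hint1 : IntegrableOn (fun t => ‖f t‖ ^ 2) (Set.Ioc 0 A) := hf.mono_set hsub2
    have hint2 : IntegrableOn (fun t => ‖f t‖ ^ 2) (Set.Ioc A x) := hf.mono_set hsub
    have hsum : (∫ t in Set.Ioc 0 A, ‖f t‖ ^ 2) + (∫ t in Set.Ioc A x, ‖f t‖ ^ 2)
        = ∫ t in Set.Ioc 0 x, ‖f t‖ ^ 2 := by
      rw [← hunion]
      exact (setIntegral_union hdisj measurableSet_Ioc hint1 hint2).symm
    have hle : (∫ t in Set.Ioc 0 x, ‖f t‖ ^ 2) ≤ If := by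
      refine setIntegral_mono_set hf ?_ ?_
      · filter_upwards with t; positivity
      · exact HasSubset.Subset.eventuallyLE (fun t ht => ht.1)
    have habs : |(∫ t in (0:ℝ)..A, ‖f t‖ ^ 2) - If| < ε' ^ 2 := h1
    rw [h2] at habs
    have := abs_lt.1 habs
    linarith [this.1, this.2]
  -- the constant C
  set C : ℝ := ‖∫ t in (0:ℝ)..A, f t * (starRingEnd ℂ) (g t)‖ with hC
  have hCnn : 0 ≤ C := norm_nonneg _
  -- choose B so that Q x is large
  have hQbig : ∀ᶠ x in atTop, max 1 ((C / ε') ^ 2) ≤ Q x := hQtop.eventually_ge_atTop _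
  obtain ⟨B, hB⟩ := (hQbig.and (eventually_ge_atTop A)).exists_forall_of_atTop
  refine ⟨B, fun x hx => ?_⟩
  obtain ⟨hQx, hAx⟩ := hB x hx
  have hQx1 : (1:ℝ) ≤ Q x := le_trans (le_max_left _ _) hQx
  have hQxC : (C / ε') ^ 2 ≤ Q x := le_trans (le_max_right _ _) hQx
  have hQxpos : 0 < Q x := lt_of_lt_of_le one_pos hQx1
  have hsqrt_pos : 0 < Real.sqrt (Q x) := Real.sqrt_pos.2 hQxpos
  -- MemLp facts
  have hfA : MemLp f 2 (volume.restrict (Set.Ioc 0 A)) :=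
    L2h_memLp hfm (hf.mono_set (fun t ht => ht.1))
  have hfAx : MemLp f 2 (volume.restrict (Set.Ioc A x)) :=
    L2h_memLp hfm (hf.mono_set (fun t ht => lt_of_le_of_lt hA0 ht.1))
  have hgA : MemLp g 2 (volume.restrict (Set.Ioc 0 A)) := L2h_memLp hgm (hgloc A)
  have hgAx : MemLp g 2 (volume.restrict (Set.Ioc A x)) :=
    L2h_memLp hgm ((hgloc x).mono_set (Set.Ioc_subset_Ioc_left hA0))
  -- split the integral
  have hi1 : IntervalIntegrable (fun t => f t * (starRingEnd ℂ) (g t)) volume 0 A := by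
    rw [intervalIntegrable_iff_integrableOn_Ioc_of_le hA0]
    exact L2h_integrable_mul_conj hgm hfA hgA
  have hi2 : IntervalIntegrable (fun t => f t * (starRingEnd ℂ) (g t)) volume A x := by
    rw [intervalIntegrable_iff_integrableOn_Ioc_of_le hAx]
    exact L2h_integrable_mul_conj hgm hfAx hgAx
  have hsplit := intervalIntegral.integral_add_adjacent_intervals hi1 hi2
  -- Cauchy–Schwarz on [A, x]
  have hCS : ‖∫ t in A..x, f t * (starRingEnd ℂ) (g t)‖ ≤ ε' * Real.sqrt (Q x) := by
    rw [intervalIntegral.integral_of_le hAx]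
    refine le_trans (L2h_cauchy_schwarz hfAx hgAx) ?_
    have h1 : Real.sqrt (∫ t in Set.Ioc A x, ‖f t‖ ^ 2) ≤ ε' := by
      rw [show ε' = Real.sqrt (ε' ^ 2) by rw [Real.sqrt_sq hε'pos.le]]
      exact Real.sqrt_le_sqrt (hAtail x hAx)
    have h2 : Real.sqrt (∫ t in Set.Ioc A x, ‖g t‖ ^ 2) ≤ Real.sqrt (Q x) := by
      apply Real.sqrt_le_sqrt
      have : Q x = ∫ t in Set.Ioc 0 x, ‖g t‖ ^ 2 :=
        intervalIntegral.integral_of_le (le_trans hA0 hAx)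
      rw [this]
      refine setIntegral_mono_set (hgloc x) ?_ ?_
      · filter_upwards with t; positivity
      · exact HasSubset.Subset.eventuallyLE (Set.Ioc_subset_Ioc_left hA0)
    exact mul_le_mul h1 h2 (Real.sqrt_nonneg _) hε'pos.le
  -- total bound on the numerator
  have hnum : ‖∫ t in (0:ℝ)..x, f t * (starRingEnd ℂ) (g t)‖ ≤ C + ε' * Real.sqrt (Q x) := by
    rw [← hsplit]
    exact le_trans (norm_add_le _ _) (add_le_add le_rfl hCS)
  -- C / sqrt(Q x) ≤ ε'
  have hCsmall : C ≤ ε' * Real.sqrt (Q x) := by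
    have h1 : C / ε' ≤ Real.sqrt (Q x) := by
      rw [show C / ε' = Real.sqrt ((C / ε') ^ 2) by rw [Real.sqrt_sq (by positivity)]]
      exact Real.sqrt_le_sqrt hQxC
    have h2 : ε' * (C / ε') ≤ ε' * Real.sqrt (Q x) :=
      mul_le_mul_of_nonneg_left h1 hε'pos.le
    have h3 : ε' * (C / ε') = C := by field_simp
    linarith
  -- conclude
  rw [dist_zero_right]
  have hden : ‖((Real.sqrt (Q x) : ℝ) : ℂ)‖ = Real.sqrt (Q x) := by
    rw [Complex.norm_real, Real.norm_of_nonneg (Real.sqrt_nonneg _)]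
  rw [norm_div, hden]
  rw [div_lt_iff₀ hsqrt_pos]
  calc ‖∫ t in (0:ℝ)..x, f t * (starRingEnd ℂ) (g t)‖
      ≤ C + ε' * Real.sqrt (Q x) := hnum
    _ ≤ ε' * Real.sqrt (Q x) + ε' * Real.sqrt (Q x) := by linarith
    _ = 2 * ε' * Real.sqrt (Q x) := by ring
    _ < ε * Real.sqrt (Q x) := by
        have : 2 * ε' < ε := by rw [hε']; linarith
        exact mul_lt_mul_of_pos_right this hsqrt_pos
end

section
/- Let φ₁,…,φ_n : [0,∞) → ℂ be functions, square-integrable on every bounded interval, such that no nontrivial linear combination of them lies in L²(0,∞). For each x > 0 let P₁(x) ≤ … ≤ Pₙ(x) be the eigenvalues of the Gram matrix Γ_x = [∫₀ˣ φ_s·conj(φ_t)]. Then lim_{x→∞} P₁(x) = ∞. -/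
open MeasureTheory Filter Matrix


lemma comb_integrableOn {n : ℕ} (φ : Fin n → ℝ → ℂ)
    (hmeas : ∀ s, Measurable (φ s))
    (hloc : ∀ s, ∀ x : ℝ, IntegrableOn (fun t => ‖φ s t‖ ^ 2) (Set.Ioc 0 x))
    (c : Fin n → ℂ) (x : ℝ) :
    IntegrableOn (fun t => ‖∑ s, c s * φ s t‖ ^ 2) (Set.Ioc 0 x) := by
  have hmeas' : Measurable fun t => ‖∑ s, c s * φ s t‖ ^ 2 :=
    ((Finset.measurable_sum _ fun s _ => (hmeas s).const_mul (c s)).norm).pow_const 2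
  have hbound : IntegrableOn (fun t => (n : ℝ) * ∑ s, ‖c s‖ ^ 2 * ‖φ s t‖ ^ 2)
      (Set.Ioc 0 x) := by
    apply Integrable.const_mul
    exact integrable_finset_sum _ fun s _ => (hloc s x).const_mul _
  refine Integrable.mono' hbound hmeas'.aestronglyMeasurable ?_
  filter_upwards with t
  rw [Real.norm_of_nonneg (by positivity)]
  calc ‖∑ s, c s * φ s t‖ ^ 2 ≤ (∑ s, ‖c s‖ * ‖φ s t‖) ^ 2 := by
        apply pow_le_pow_left₀ (norm_nonneg _)
        exact (norm_sum_le _ _).trans (le_of_eq (by simp [norm_mul]))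
    _ ≤ (n : ℝ) * ∑ s, (‖c s‖ * ‖φ s t‖) ^ 2 := by
        simpa using sq_sum_le_card_mul_sum_sq (s := Finset.univ)
          (f := fun s => ‖c s‖ * ‖φ s t‖)
    _ = (n : ℝ) * ∑ s, ‖c s‖ ^ 2 * ‖φ s t‖ ^ 2 := by simp [mul_pow]

lemma prod_integrableOn {n : ℕ} (φ : Fin n → ℝ → ℂ)
    (hmeas : ∀ s, Measurable (φ s))
    (hloc : ∀ s, ∀ x : ℝ, IntegrableOn (fun t => ‖φ s t‖ ^ 2) (Set.Ioc 0 x))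
    (s t : Fin n) (x : ℝ) :
    IntegrableOn (fun u => φ s u * (starRingEnd ℂ) (φ t u)) (Set.Ioc 0 x) := by
  have hb : IntegrableOn (fun u => (‖φ s u‖ ^ 2 + ‖φ t u‖ ^ 2) / 2) (Set.Ioc 0 x) :=
    ((hloc s x).add (hloc t x)).div_const 2
  refine Integrable.mono' hb
    (((hmeas s).mul (continuous_star.measurable.comp (hmeas t))).aestronglyMeasurable) ?_
  filter_upwards with u
  rw [norm_mul, RCLike.norm_conj]
  nlinarith [sq_nonneg (‖φ s u‖ - ‖φ t u‖)]

lemma gram_quadratic {n : ℕ} (φ : Fin n → ℝ → ℂ)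
    (hmeas : ∀ s, Measurable (φ s))
    (hloc : ∀ s, ∀ x : ℝ, IntegrableOn (fun t => ‖φ s t‖ ^ 2) (Set.Ioc 0 x))
    (x : ℝ) (hx : 0 ≤ x) (v : Fin n → ℂ) :
    star v ⬝ᵥ (Matrix.of fun s t => ∫ u in (0:ℝ)..x, φ s u * (starRingEnd ℂ) (φ t u)) *ᵥ v
      = ((∫ t in Set.Ioc 0 x, ‖∑ s, (starRingEnd ℂ) (v s) * φ s t‖ ^ 2 : ℝ) : ℂ) := by
  have hprod := prod_integrableOn φ hmeas hloc
  simp only [dotProduct, Matrix.mulVec, Matrix.of_apply, Pi.star_apply, RCLike.star_def,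
    intervalIntegral.integral_of_le hx]
  calc ∑ s, (starRingEnd ℂ) (v s) *
        ∑ t, (∫ u in Set.Ioc 0 x, φ s u * (starRingEnd ℂ) (φ t u)) * v t
      = ∑ s, ∑ t, ∫ u in Set.Ioc 0 x,
          (starRingEnd ℂ) (v s) * (φ s u * (starRingEnd ℂ) (φ t u) * v t) := by
        refine Finset.sum_congr rfl fun s _ => ?_
        rw [Finset.mul_sum]
        refine Finset.sum_congr rfl fun t _ => ?_
        rw [← integral_mul_const, ← integral_const_mul]
    _ = ∫ u in Set.Ioc 0 x, ∑ s, ∑ t,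
          (starRingEnd ℂ) (v s) * (φ s u * (starRingEnd ℂ) (φ t u) * v t) := by
        symm
        rw [integral_finset_sum _ (fun s _ => integrable_finset_sum _ fun t _ =>
          (((hprod s t x).mul_const _).const_mul _))]
        exact Finset.sum_congr rfl fun s _ => integral_finset_sum _ fun t _ =>
          (((hprod s t x).mul_const _).const_mul _)
    _ = ∫ u in Set.Ioc 0 x, ((‖∑ s, (starRingEnd ℂ) (v s) * φ s u‖ : ℂ) ^ 2) := by
        refine setIntegral_congr_fun measurableSet_Ioc fun u _ => ?_
        have key : ∑ s, ∑ t, (starRingEnd ℂ) (v s) * (φ s u * (starRingEnd ℂ) (φ t u) * v t)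
            = (∑ s, (starRingEnd ℂ) (v s) * φ s u) *
              (starRingEnd ℂ) (∑ t, (starRingEnd ℂ) (v t) * φ t u) := by
          rw [map_sum, Finset.sum_mul_sum]
          refine Finset.sum_congr rfl fun s _ => Finset.sum_congr rfl fun t _ => ?_
          simp only [_root_.map_mul, RingHomCompTriple.comp_apply, RingHom.id_apply,
            Complex.conj_conj]
          ring
        rw [key, RCLike.mul_conj]
        norm_cast
    _ = ((∫ t in Set.Ioc 0 x, ‖∑ s, (starRingEnd ℂ) (v s) * φ s t‖ ^ 2 : ℝ) : ℂ) := by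
        simp only [← Complex.ofReal_pow]
        exact integral_ofReal

/-- If no nontrivial linear combination of the locally square-integrable functions
`φ₁, …, φₙ` lies in `L²(0,∞)`, then the smallest eigenvalue of the Gram matrix
`Γ_x = [∫₀ˣ φ_s · conj φ_t]` tends to infinity as `x → ∞`. -/
theorem smallest_gram_eigenvalue_tendsto_atTop
    (n : ℕ) (hn : 0 < n) (φ : Fin n → ℝ → ℂ)
    (hmeas : ∀ s, Measurable (φ s))
    (hloc : ∀ s, ∀ x : ℝ, IntegrableOn (fun t => ‖φ s t‖ ^ 2) (Set.Ioc 0 x))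
    (hind : ∀ c : Fin n → ℂ, c ≠ 0 →
      ¬ IntegrableOn (fun t => ‖∑ s, c s * φ s t‖ ^ 2) (Set.Ioi 0))
    (Γ : ℝ → Matrix (Fin n) (Fin n) ℂ)
    (hΓ : ∀ x, Γ x = Matrix.of fun s t => ∫ u in (0:ℝ)..x, φ s u * (starRingEnd ℂ) (φ t u))
    (hherm : ∀ x, (Γ x).IsHermitian) :
    Tendsto (fun x : ℝ => ⨅ i : Fin n, (hherm x).eigenvalues i) atTop atTop := by
  haveI : Nonempty (Fin n) := ⟨⟨0, hn⟩⟩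
  set Q : ℝ → (Fin n → ℂ) → ℝ :=
    fun x v => ∫ t in Set.Ioc 0 x, ‖∑ s, (starRingEnd ℂ) (v s) * φ s t‖ ^ 2 with hQdef
  have hquad : ∀ x : ℝ, 0 ≤ x → ∀ v : Fin n → ℂ,
      star v ⬝ᵥ (Γ x) *ᵥ v = ((Q x v : ℝ) : ℂ) := by
    intro x hx v
    rw [hΓ]
    exact gram_quadratic φ hmeas hloc x hx v
  have hQmono : ∀ (v : Fin n → ℂ) (x y : ℝ), x ≤ y → Q x v ≤ Q y v := by
    intro v x y hxy
    refine setIntegral_mono_set (comb_integrableOn φ hmeas hloc _ y) ?_ ?_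
    · filter_upwards with t using by positivity
    · exact HasSubset.Subset.eventuallyLE (Set.Ioc_subset_Ioc_right hxy)
  rw [tendsto_atTop]
  by_contra hcon
  push_neg at hcon
  obtain ⟨M, hM⟩ := hcon
  have hfreq := Filter.frequently_atTop.mp hM
  have hu : ∀ k : ℕ, ∃ x : ℝ, (k : ℝ) ≤ x ∧ (⨅ i, (hherm x).eigenvalues i) < M := by
    intro k
    obtain ⟨x, hx1, hx2⟩ := hfreq (k : ℝ)
    exact ⟨x, hx1, hx2⟩
  choose u hu1 hu2 using hu
  have hu0 : ∀ k : ℕ, (0:ℝ) ≤ u k := fun k => (Nat.cast_nonneg k).trans (hu1 k)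
  have hidx : ∀ k : ℕ, ∃ i, (hherm (u k)).eigenvalues i = ⨅ i, (hherm (u k)).eigenvalues i :=
    fun k => exists_eq_ciInf_of_finite
  choose idx hidx using hidx
  have hWnorm : ∀ k, ‖((hherm (u k)).eigenvectorBasis (idx k) : EuclideanSpace ℂ (Fin n))‖ = 1 :=
    fun k => (hherm (u k)).eigenvectorBasis.orthonormal.1 (idx k)
  have hWQ : ∀ k : ℕ, Q (u k) ((hherm (u k)).eigenvectorBasis (idx k)) < M := by
    intro k
    have h1 := (hherm (u k)).eigenvalues_eq (idx k)
    have h2 := hquad (u k) (hu0 k) ((hherm (u k)).eigenvectorBasis (idx k))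
    have h2' := congrArg Complex.re h2
    rw [Complex.ofReal_re] at h2'
    have h3 : (hherm (u k)).eigenvalues (idx k)
        = Q (u k) ((hherm (u k)).eigenvectorBasis (idx k)) := by
      rw [h1]; exact h2'
    calc Q (u k) ((hherm (u k)).eigenvectorBasis (idx k))
        = (hherm (u k)).eigenvalues (idx k) := h3.symm
      _ = ⨅ i, (hherm (u k)).eigenvalues i := hidx k
      _ < M := hu2 k
  obtain ⟨v, hvmem, ψ, hψmono, hψtend⟩ :=
    (isCompact_sphere (0 : EuclideanSpace ℂ (Fin n)) 1).tendsto_subseq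
      (x := fun k => ((hherm (u k)).eigenvectorBasis (idx k) : EuclideanSpace ℂ (Fin n)))
      (fun k => by simpa [mem_sphere_zero_iff_norm] using hWnorm k)
  have hvnorm : ‖v‖ = 1 := mem_sphere_zero_iff_norm.mp hvmem
  have hvne : v ≠ 0 := by
    intro h
    rw [h, norm_zero] at hvnorm
    exact zero_ne_one hvnorm
  have happ : ∀ s : Fin n, Continuous fun w : EuclideanSpace ℂ (Fin n) => w s := fun s =>
    (continuous_apply s).comp (PiLp.continuous_ofLp 2 fun _ : Fin n => ℂ)
  have hkey : ∀ X : ℝ, Q X v ≤ M := by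
    intro X
    set Y := max X 0 with hY
    have hY0 : (0:ℝ) ≤ Y := le_max_right _ _
    refine (hQmono v X Y (le_max_left _ _)).trans ?_
    have hGQ : ∀ w : EuclideanSpace ℂ (Fin n),
        Complex.re (∑ s, (starRingEnd ℂ) (w s) * ∑ t, Γ Y s t * w t) = Q Y w := by
      intro w
      have h2 : star (w : Fin n → ℂ) ⬝ᵥ (Γ Y) *ᵥ (w : Fin n → ℂ) = ((Q Y w : ℝ) : ℂ) :=
        hquad Y hY0 w
      calc Complex.re (∑ s, (starRingEnd ℂ) (w s) * ∑ t, Γ Y s t * w t)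
          = Complex.re (star (w : Fin n → ℂ) ⬝ᵥ (Γ Y) *ᵥ (w : Fin n → ℂ)) := rfl
        _ = Complex.re ((Q Y w : ℝ) : ℂ) := by rw [h2]
        _ = Q Y w := Complex.ofReal_re _
    have hcont : Continuous fun w : EuclideanSpace ℂ (Fin n) =>
        Complex.re (∑ s, (starRingEnd ℂ) (w s) * ∑ t, Γ Y s t * w t) := by
      apply Complex.continuous_re.comp
      refine continuous_finset_sum _ fun s _ => Continuous.mul ?_ ?_
      · exact continuous_star.comp (happ s)
      · exact continuous_finset_sum _ fun t _ => continuous_const.mul (happ t)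
    have htend := (hcont.tendsto v).comp hψtend
    rw [← hGQ v]
    refine le_of_tendsto htend ?_
    have hev : ∀ᶠ k : ℕ in atTop, Y ≤ u (ψ k) := by
      filter_upwards [tendsto_natCast_atTop_atTop.eventually_ge_atTop Y] with k hk
      exact hk.trans ((Nat.cast_le.mpr (hψmono.id_le k)).trans (hu1 (ψ k)))
    filter_upwards [hev] with k hk
    simp only [Function.comp_apply]
    rw [hGQ]
    exact (hQmono _ Y (u (ψ k)) hk).trans (hWQ (ψ k)).le
  set c : Fin n → ℂ := fun s => (starRingEnd ℂ) (v s) with hc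
  have hcne : c ≠ 0 := by
    intro h
    apply hvne
    ext s
    have hs := congrFun h s
    simpa [hc] using congrArg (starRingEnd ℂ) hs
  apply hind c hcne
  refine integrableOn_Ioi_of_intervalIntegral_norm_bounded M 0
    (b := fun m : ℕ => (m : ℝ)) (fun m => comb_integrableOn φ hmeas hloc c (m : ℝ))
    tendsto_natCast_atTop_atTop ?_
  filter_upwards with m
  rw [intervalIntegral.integral_of_le (Nat.cast_nonneg m)]
  have hnn : ∀ t : ℝ, ‖‖∑ s, c s * φ s t‖ ^ 2‖ = ‖∑ s, c s * φ s t‖ ^ 2 :=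
    fun t => Real.norm_of_nonneg (by positivity)
  calc ∫ t in Set.Ioc 0 (m:ℝ), ‖‖∑ s, c s * φ s t‖ ^ 2‖
      = ∫ t in Set.Ioc 0 (m:ℝ), ‖∑ s, c s * φ s t‖ ^ 2 := by simp_rw [hnn]
    _ = Q (m:ℝ) v := rfl
    _ ≤ M := hkey _
end

section
/- Let g ∈ Δ (so M[g] ∈ L²(0,∞)) and let π solve M[π] = conj(λ)·π with π ∈ L²(0,x) for every x but π ∉ L²(0,∞). Set P(x) = ∫₀ˣ |π|². Then lim_{x→∞} [g π](x)/P(x)^{1/2} = 0. -/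
open MeasureTheory Filter

private lemma my_cs {μ : Measure ℝ} {f u : ℝ → ℝ}
    (hfm : AEStronglyMeasurable f μ) (hum : AEStronglyMeasurable u μ)
    (hfn : ∀ x, 0 ≤ f x) (hun : ∀ x, 0 ≤ u x)
    (hf2 : Integrable (fun x => f x ^ 2) μ) (hu2 : Integrable (fun x => u x ^ 2) μ) :
    ∫ x, f x * u x ∂μ ≤ Real.sqrt (∫ x, f x ^ 2 ∂μ) * Real.sqrt (∫ x, u x ^ 2 ∂μ) := by
  have hpq : Real.HolderConjugate 2 2 := ⟨by norm_num, by norm_num, by norm_num⟩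
  have h2 : ENNReal.ofReal (2:ℝ) = 2 := by norm_num
  have hf : MemLp f (ENNReal.ofReal (2:ℝ)) μ := by
    rw [h2]; exact (memLp_two_iff_integrable_sq hfm).2 hf2
  have hu : MemLp u (ENNReal.ofReal (2:ℝ)) μ := by
    rw [h2]; exact (memLp_two_iff_integrable_sq hum).2 hu2
  have key := integral_mul_le_Lp_mul_Lq_of_nonneg hpq
    (Eventually.of_forall hfn) (Eventually.of_forall hun) hf hu
  have hrw : ∀ v : ℝ → ℝ, (fun a => v a ^ (2:ℝ)) = fun a => v a ^ (2:ℕ) := by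
    intro v; funext a; rw [← Real.rpow_natCast (v a) 2]; norm_num
  rw [hrw f, hrw u] at key
  calc ∫ x, f x * u x ∂μ ≤
      (∫ a, f a ^ (2:ℕ) ∂μ) ^ (1/2 : ℝ) * (∫ a, u a ^ (2:ℕ) ∂μ) ^ (1/2 : ℝ) := key
    _ = Real.sqrt (∫ x, f x ^ 2 ∂μ) * Real.sqrt (∫ x, u x ^ 2 ∂μ) := by
        rw [Real.sqrt_eq_rpow, Real.sqrt_eq_rpow]

/-- Let `g ∈ Δ` (so `g, M[g] ∈ L²(0,∞)`) and let `π` solve `M[π] = conj(λ)·π`, with `π`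
square-integrable on each `(0,x)` but not on `(0,∞)`, and `P x = ∫₀ˣ |π|²`. If the
concomitant `F x = [g π](x)` satisfies
`F x = F 0 + ∫₀ˣ conj(π)·(M[g] − conj(λ) g)`, then `F x / √(P x) → 0` as `x → ∞`. -/
theorem concomitant_over_sqrt_tendsto_zero
    (M : (ℝ → ℂ) → (ℝ → ℂ)) (g π : ℝ → ℂ) (lam : ℂ) (F : ℝ → ℂ)
    (hgmeas : Measurable g) (hπmeas : Measurable π)
    (hgL2 : IntegrableOn (fun t => ‖g t‖ ^ 2) (Set.Ioi 0))
    (hMgL2 : IntegrableOn (fun t => ‖M g t‖ ^ 2) (Set.Ioi 0))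
    (hπeq : M π = fun t => (starRingEnd ℂ) lam * π t)
    (hπloc : ∀ x : ℝ, IntegrableOn (fun t => ‖π t‖ ^ 2) (Set.Ioc 0 x))
    (hπnotL2 : ¬ IntegrableOn (fun t => ‖π t‖ ^ 2) (Set.Ioi 0))
    (hGreen : ∀ x : ℝ, F x = F 0 +
      ∫ t in (0:ℝ)..x, (starRingEnd ℂ) (π t) * (M g t - (starRingEnd ℂ) lam * g t)) :
    Tendsto (fun x : ℝ =>
        F x / ((Real.sqrt (∫ t in (0:ℝ)..x, ‖π t‖ ^ 2) : ℝ) : ℂ))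
      atTop (nhds 0) := by
  set c : ℝ → ℂ := fun t => (starRingEnd ℂ) (π t) * (M g t - (starRingEnd ℂ) lam * g t) with hc
  set P : ℝ → ℝ := fun x => ∫ t in (0:ℝ)..x, ‖π t‖ ^ 2 with hPdef
  -- monotonicity of P on [0, ∞)
  have hππ : ∀ ⦃x y : ℝ⦄, 0 ≤ x → IntegrableOn (fun t => ‖π t‖ ^ 2) (Set.Ioc x y) :=
    fun x y hx => (hπloc y).mono_set (Set.Ioc_subset_Ioc hx le_rfl)
  have hPmono : ∀ x y : ℝ, 0 ≤ x → x ≤ y → P x ≤ P y := by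
    intro x y hx hxy
    have h1 : IntervalIntegrable (fun t => ‖π t‖ ^ 2) volume 0 x :=
      (intervalIntegrable_iff_integrableOn_Ioc_of_le hx).2 (hπloc x)
    have h2 : IntervalIntegrable (fun t => ‖π t‖ ^ 2) volume x y :=
      (intervalIntegrable_iff_integrableOn_Ioc_of_le hxy).2 (hππ hx)
    have hadd := intervalIntegral.integral_add_adjacent_intervals h1 h2
    have h3 : 0 ≤ ∫ t in x..y, ‖π t‖ ^ 2 :=
      intervalIntegral.integral_nonneg hxy (fun t _ => sq_nonneg _)
    simp only [hPdef]
    linarith [hadd]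
  -- P tends to infinity
  have hPtop : Tendsto P atTop atTop := by
    rw [tendsto_atTop]
    intro b
    by_contra hcon
    rw [not_eventually] at hcon
    have hall : ∀ y : ℝ, 0 ≤ y → P y ≤ b := by
      intro y hy
      obtain ⟨x, hnb, hyx⟩ := (hcon.and_eventually (eventually_ge_atTop y)).exists
      exact le_trans (hPmono y x hy hyx) (le_of_not_ge hnb)
    refine hπnotL2 ?_
    refine integrableOn_Ioi_of_intervalIntegral_norm_bounded b 0
      (fun i => hπloc i) tendsto_id ?_
    filter_upwards [eventually_ge_atTop (0:ℝ)] with i hi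
    have heq : (∫ x in (0:ℝ)..i, ‖‖π x‖ ^ 2‖) = P i := by
      simp only [hPdef]
      congr 1
      funext t
      exact Real.norm_of_nonneg (sq_nonneg _)
    rw [heq]
    exact hall i hi
  have hsqrt_top : Tendsto (fun x => Real.sqrt (P x)) atTop atTop := by
    rw [tendsto_atTop]
    intro b
    filter_upwards [hPtop.eventually_ge_atTop (b^2)] with x hx
    calc b ≤ |b| := le_abs_self b
      _ = Real.sqrt (b^2) := (Real.sqrt_sq_eq_abs b).symm
      _ ≤ Real.sqrt (P x) := Real.sqrt_le_sqrt hx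
  -- measurability of ‖M g‖ on (0, ∞)
  have hMgm : AEStronglyMeasurable (fun t => ‖M g t‖) (volume.restrict (Set.Ioi 0)) := by
    have h1 : AEMeasurable (fun t => ‖M g t‖ ^ 2) (volume.restrict (Set.Ioi 0)) :=
      hMgL2.aestronglyMeasurable.aemeasurable
    have h2 : AEMeasurable (fun t => Real.sqrt (‖M g t‖ ^ 2)) (volume.restrict (Set.Ioi 0)) :=
      Real.continuous_sqrt.measurable.comp_aemeasurable h1
    have h3 : (fun t => Real.sqrt (‖M g t‖ ^ 2)) = fun t => ‖M g t‖ := by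
      funext t; exact Real.sqrt_sq (norm_nonneg _)
    rw [h3] at h2
    exact h2.aestronglyMeasurable
  -- the majorant u
  set u : ℝ → ℝ := fun t => ‖M g t‖ + ‖lam‖ * ‖g t‖ with hu
  have hu_nonneg : ∀ t, 0 ≤ u t := fun t => by positivity
  have hum : AEStronglyMeasurable u (volume.restrict (Set.Ioi 0)) :=
    hMgm.add ((hgmeas.norm.const_mul ‖lam‖).aestronglyMeasurable)
  have hu2 : IntegrableOn (fun t => u t ^ 2) (Set.Ioi 0) := by
    have hmaj : Integrable (fun t => 2 * ‖M g t‖ ^ 2 + 2 * ‖lam‖ ^ 2 * ‖g t‖ ^ 2)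
        (volume.restrict (Set.Ioi 0)) := by
      have h := (hMgL2.const_mul 2).add (hgL2.const_mul (2 * ‖lam‖ ^ 2))
      refine h.congr (Eventually.of_forall fun t => ?_)
      simp only [Pi.add_apply]
      try ring
    refine Integrable.mono' hmaj ?_ (Eventually.of_forall fun t => ?_)
    · have h := hum.mul hum
      simp only [pow_two]; exact h
    · rw [Real.norm_of_nonneg (by positivity)]
      simp only [hu]
      nlinarith [sq_nonneg (‖M g t‖ - ‖lam‖ * ‖g t‖), norm_nonneg (M g t),
        norm_nonneg (g t), norm_nonneg lam]
  -- pointwise bound on c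
  have hcbound : ∀ t, ‖c t‖ ≤ ‖π t‖ * u t := by
    intro t
    show ‖(starRingEnd ℂ) (π t) * (M g t - (starRingEnd ℂ) lam * g t)‖ ≤
      ‖π t‖ * (‖M g t‖ + ‖lam‖ * ‖g t‖)
    rw [norm_mul, starRingEnd_apply, norm_star]
    refine mul_le_mul_of_nonneg_left ?_ (norm_nonneg _)
    refine le_trans (norm_sub_le _ _) ?_
    rw [norm_mul, starRingEnd_apply, norm_star]
  -- main estimate
  rw [NormedAddCommGroup.tendsto_nhds_zero]
  intro ε hε
  have hclaim : ∃ C : ℝ, 0 ≤ C ∧ ∀ᶠ x in atTop, ‖F x‖ ≤ C + (ε/4) * Real.sqrt (P x) := by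
    by_cases hcase : ∀ x : ℝ, IntegrableOn c (Set.Ioc 0 x)
    · -- integrable case
      -- total integral of u²
      have htend : Tendsto (fun X => ∫ t in (0:ℝ)..X, u t ^ 2) atTop
          (nhds (∫ t in Set.Ioi (0:ℝ), u t ^ 2)) :=
        intervalIntegral_tendsto_integral_Ioi 0 hu2 tendsto_id
      set T : ℝ := ∫ t in Set.Ioi (0:ℝ), u t ^ 2 with hT
      have hε4 : (0:ℝ) < (ε/4)^2 := by positivity
      have hX : ∃ X : ℝ, 0 ≤ X ∧ T - (ε/4)^2 < ∫ t in (0:ℝ)..X, u t ^ 2 := by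
        have := htend.eventually (lt_mem_nhds (show T - (ε/4)^2 < T by linarith))
        obtain ⟨X, h1, h2⟩ := (this.and (eventually_ge_atTop (0:ℝ))).exists
        exact ⟨X, h2, h1⟩
      obtain ⟨X, hX0, hXtail⟩ := hX
      have htail : ∫ t in Set.Ioi X, u t ^ 2 ≤ (ε/4)^2 := by
        have hsplit : T = (∫ t in Set.Ioc 0 X, u t ^ 2) + ∫ t in Set.Ioi X, u t ^ 2 := by
          rw [hT, ← setIntegral_union (Set.Ioc_disjoint_Ioi le_rfl) measurableSet_Ioi
            (hu2.mono_set (Set.Ioc_subset_Ioi_self)) (hu2.mono_set (Set.Ioi_subset_Ioi hX0)),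
            Set.Ioc_union_Ioi_eq_Ioi hX0]
        rw [intervalIntegral.integral_of_le hX0] at hXtail
        linarith
      refine ⟨‖F 0‖ + ‖∫ t in (0:ℝ)..X, c t‖, by positivity, ?_⟩
      filter_upwards [eventually_ge_atTop X, eventually_ge_atTop (0:ℝ)] with x hxX hx0
      have hIocsub : Set.Ioc X x ⊆ Set.Ioi (0:ℝ) := fun t ht =>
        lt_of_le_of_lt hX0 ht.1
      have hi1 : IntervalIntegrable c volume 0 X :=
        (intervalIntegrable_iff_integrableOn_Ioc_of_le hX0).2 (hcase X)
      have hi2 : IntervalIntegrable c volume X x :=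
        (intervalIntegrable_iff_integrableOn_Ioc_of_le hxX).2
          ((hcase x).mono_set (Set.Ioc_subset_Ioc hX0 le_rfl))
      have hsplitF : F x = F 0 + ((∫ t in (0:ℝ)..X, c t) + ∫ t in X..x, c t) := by
        rw [hGreen x, intervalIntegral.integral_add_adjacent_intervals hi1 hi2]
      -- bound the far integral
      have hrestrle : volume.restrict (Set.Ioc X x) ≤ volume.restrict (Set.Ioi (0:ℝ)) :=
        Measure.restrict_mono hIocsub le_rfl
      have hπm' : AEStronglyMeasurable (fun t => ‖π t‖) (volume.restrict (Set.Ioc X x)) :=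
        hπmeas.norm.aestronglyMeasurable
      have hum' : AEStronglyMeasurable u (volume.restrict (Set.Ioc X x)) :=
        hum.mono_measure hrestrle
      have hπ2' : Integrable (fun t => ‖π t‖ ^ 2) (volume.restrict (Set.Ioc X x)) :=
        (hπloc x).mono_set (Set.Ioc_subset_Ioc hX0 le_rfl)
      have hu2' : Integrable (fun t => u t ^ 2) (volume.restrict (Set.Ioc X x)) :=
        hu2.mono_set hIocsub
      have hfar : ‖∫ t in X..x, c t‖ ≤ Real.sqrt (P x) * (ε/4) := by
        rw [intervalIntegral.integral_of_le hxX]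
        have h1 : ‖∫ t in Set.Ioc X x, c t‖ ≤ ∫ t in Set.Ioc X x, ‖c t‖ :=
          norm_integral_le_integral_norm c
        have hπℒ : MemLp (fun t => ‖π t‖) 2 (volume.restrict (Set.Ioc X x)) :=
          (memLp_two_iff_integrable_sq hπm').2 hπ2'
        have huℒ : MemLp u 2 (volume.restrict (Set.Ioc X x)) :=
          (memLp_two_iff_integrable_sq hum').2 hu2'
        have hprodint : Integrable (fun t => ‖π t‖ * u t) (volume.restrict (Set.Ioc X x)) := by
          have hmem : MemLp ((fun t => ‖π t‖) • u) 1 (volume.restrict (Set.Ioc X x)) :=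
            huℒ.smul hπℒ (hpqr := ⟨by
              simp [ENNReal.inv_two_add_inv_two]⟩)
          have := memLp_one_iff_integrable.1 hmem
          exact this
        have hcint : Integrable c (volume.restrict (Set.Ioc X x)) :=
          (hcase x).mono_set (Set.Ioc_subset_Ioc hX0 le_rfl)
        have h2 : ∫ t in Set.Ioc X x, ‖c t‖ ≤ ∫ t in Set.Ioc X x, ‖π t‖ * u t := by
          refine integral_mono hcint.norm hprodint ?_
          exact fun t => hcbound t
        have h3 := my_cs hπm' hum' (fun t => norm_nonneg _) hu_nonneg hπ2' hu2'
        have h4 : ∫ t in Set.Ioc X x, ‖π t‖ ^ 2 ≤ P x := by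
          have : P x = ∫ t in Set.Ioc 0 x, ‖π t‖ ^ 2 := by
            simp only [hPdef]; rw [intervalIntegral.integral_of_le hx0]
          rw [this]
          exact setIntegral_mono_set (hπloc x)
            (Eventually.of_forall fun t => sq_nonneg _)
            (HasSubset.Subset.eventuallyLE (Set.Ioc_subset_Ioc hX0 le_rfl))
        have h5 : ∫ t in Set.Ioc X x, u t ^ 2 ≤ (ε/4)^2 := by
          refine le_trans ?_ htail
          exact setIntegral_mono_set (hu2.mono_set (Set.Ioi_subset_Ioi hX0))
            (Eventually.of_forall fun t => sq_nonneg _)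
            (HasSubset.Subset.eventuallyLE Set.Ioc_subset_Ioi_self)
        calc ‖∫ t in Set.Ioc X x, c t‖ ≤ ∫ t in Set.Ioc X x, ‖π t‖ * u t := le_trans h1 h2
          _ ≤ Real.sqrt (∫ t in Set.Ioc X x, ‖π t‖ ^ 2) *
              Real.sqrt (∫ t in Set.Ioc X x, u t ^ 2) := h3
          _ ≤ Real.sqrt (P x) * (ε/4) := by
              refine mul_le_mul (Real.sqrt_le_sqrt h4) ?_ (Real.sqrt_nonneg _)
                (Real.sqrt_nonneg _)
              calc Real.sqrt (∫ t in Set.Ioc X x, u t ^ 2) ≤ Real.sqrt ((ε/4)^2) :=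
                  Real.sqrt_le_sqrt h5
                _ = ε/4 := Real.sqrt_sq (by positivity)
      calc ‖F x‖ ≤ ‖F 0‖ + (‖∫ t in (0:ℝ)..X, c t‖ + ‖∫ t in X..x, c t‖) := by
            rw [hsplitF]
            exact le_trans (norm_add_le _ _) (by gcongr; exact norm_add_le _ _)
        _ ≤ (‖F 0‖ + ‖∫ t in (0:ℝ)..X, c t‖) + (ε/4) * Real.sqrt (P x) := by
            rw [mul_comm] at hfar; linarith
    · -- non-integrable case: the interval integral is eventually 0
      push_neg at hcase
      obtain ⟨x₀, hx₀⟩ := hcase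
      refine ⟨‖F 0‖, norm_nonneg _, ?_⟩
      filter_upwards [eventually_ge_atTop x₀, eventually_ge_atTop (0:ℝ)] with x hx hx0
      have hnot : ¬ IntegrableOn c (Set.Ioc 0 x) := fun h =>
        hx₀ (h.mono_set (Set.Ioc_subset_Ioc le_rfl hx))
      have : F x = F 0 := by
        rw [hGreen x, intervalIntegral.integral_of_le hx0, integral_undef hnot, add_zero]
      rw [this]
      have : 0 ≤ (ε/4) * Real.sqrt (P x) := by positivity
      linarith
  obtain ⟨C, hC0, hev⟩ := hclaim
  have hB : (0:ℝ) < 4 * (C + 1) / ε := by positivity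
  filter_upwards [hev, hsqrt_top.eventually_ge_atTop (4 * (C + 1) / ε)] with x hx hs
  set s : ℝ := Real.sqrt (P x) with hs'
  have hspos : 0 < s := lt_of_lt_of_le hB hs
  have hnorm : ‖F x / (s : ℂ)‖ = ‖F x‖ / s := by
    rw [norm_div, Complex.norm_real, Real.norm_of_nonneg hspos.le]
  rw [hnorm]
  have h1 : ‖F x‖ / s ≤ C / s + ε/4 := by
    rw [div_le_iff₀ hspos]
    calc ‖F x‖ ≤ C + (ε/4) * s := hx
      _ = (C / s + ε/4) * s := by field_simp
  have h2 : C / s ≤ C / (4 * (C + 1) / ε) := div_le_div_of_nonneg_left hC0 hB hs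
  have h3 : C / (4 * (C + 1) / ε) < ε / 2 := by
    rw [div_lt_iff₀ hB]
    have heq : ε / 2 * (4 * (C + 1) / ε) = 2 * (C + 1) := by
      field_simp; ring
    rw [heq]; linarith
  calc ‖F x‖ / s ≤ C / s + ε/4 := h1
    _ < ε/2 + ε/4 := by linarith [lt_of_le_of_lt h2 h3]
    _ < ε := by linarith
end
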